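/- Assume deg f > 1. In H(f), for g ∈ ℂ[h] nonzero and i, k ≥ 0, the element x^i g(h) y^k commutes with h if and only if i = k; consequently the centralizer of h in H(f) equals H(f)_0, and H(f)_0 is a maximal commutative subalgebra. -/

import Mathlib

open Polynomial MulOpposite

noncomputable section

/-- Defining relations of the generalized Heisenberg algebra H(f):
generators x (index 0), y (index 1), h (index 2) with
h*x = x*f(h), y*h = f(h)*y, y*x = x*y + (f(h) - h). -/
inductive HeisRel (f : ℂ[X]) : FreeAlgebra ℂ (Fin 3) → FreeAlgebra ℂ (Fin 3) → Prop
  | hx : HeisRel f (FreeAlgebra.ι ℂ 2 * FreeAlgebra.ι ℂ 0)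
      (FreeAlgebra.ι ℂ 0 * aeval (FreeAlgebra.ι ℂ 2) f)
  | yh : HeisRel f (FreeAlgebra.ι ℂ 1 * FreeAlgebra.ι ℂ 2)
      (aeval (FreeAlgebra.ι ℂ 2) f * FreeAlgebra.ι ℂ 1)
  | yx : HeisRel f (FreeAlgebra.ι ℂ 1 * FreeAlgebra.ι ℂ 0)
      (FreeAlgebra.ι ℂ 0 * FreeAlgebra.ι ℂ 1 + (aeval (FreeAlgebra.ι ℂ 2) f - FreeAlgebra.ι ℂ 2))

/-- The generalized Heisenberg algebra H(f). -/
abbrev GHA (f : ℂ[X]) := RingQuot (HeisRel f)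

def ghaX (f : ℂ[X]) : GHA f := RingQuot.mkAlgHom ℂ (HeisRel f) (FreeAlgebra.ι ℂ 0)
def ghaY (f : ℂ[X]) : GHA f := RingQuot.mkAlgHom ℂ (HeisRel f) (FreeAlgebra.ι ℂ 1)
def ghaH (f : ℂ[X]) : GHA f := RingQuot.mkAlgHom ℂ (HeisRel f) (FreeAlgebra.ι ℂ 2)

/-- k-th compositional power of σ applied to h, as a polynomial: σ^k(h). -/
def sigmaIter (f : ℂ[X]) : ℕ → ℂ[X]
  | 0 => X
  | k + 1 => (sigmaIter f k).comp f

lemma sigmaIter_succ (f : ℂ[X]) (k : ℕ) : sigmaIter f (k+1) = (sigmaIter f k).comp f := rfl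
lemma comp_sigmaIter (f : ℂ[X]) (k : ℕ) : f.comp (sigmaIter f k) = (sigmaIter f k).comp f := by
  induction k with
  | zero => simp [sigmaIter]
  | succ n ih => rw [sigmaIter_succ, ← Polynomial.comp_assoc, ih, Polynomial.comp_assoc]
lemma sigmaIter_natDegree (f : ℂ[X]) (k : ℕ) :
    (sigmaIter f k).natDegree = f.natDegree ^ k := by
  induction k with
  | zero => simp [sigmaIter]
  | succ n ih => rw [sigmaIter_succ, natDegree_comp, ih, pow_succ]

lemma sigmaIter_injective (f : ℂ[X]) (hf : 1 < f.natDegree) :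
    Function.Injective (sigmaIter f) := by
  intro i k h
  have := congrArg natDegree h
  rw [sigmaIter_natDegree, sigmaIter_natDegree] at this
  exact Nat.pow_right_injective hf this

abbrev Mrep := (ℕ × ℕ) →₀ ℂ[X]
def Xop : Mrep →ₗ[ℂ] Mrep := Finsupp.lsum ℂ fun ik => Finsupp.lsingle (ik.1 + 1, ik.2)
def Hop (f : ℂ[X]) : Mrep →ₗ[ℂ] Mrep :=
  Finsupp.lsum ℂ fun ik =>
    Finsupp.lsingle ik ∘ₗ (LinearMap.mulLeft ℂ (sigmaIter f ik.1)).restrictScalars ℂ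
def compF (f : ℂ[X]) : ℂ[X] →ₗ[ℂ] ℂ[X] := (Polynomial.aeval f).toLinearMap
lemma compF_apply (f p : ℂ[X]) : compF f p = p.comp f := by
  simp [compF, Polynomial.comp, Polynomial.aeval_def]
def Yop (f : ℂ[X]) : Mrep →ₗ[ℂ] Mrep :=
  Finsupp.lsum ℂ fun ik =>
    Finsupp.lsingle (ik.1, ik.2 + 1) ∘ₗ compF f +
    Finsupp.lsingle (ik.1 - 1, ik.2) ∘ₗ LinearMap.mulLeft ℂ (sigmaIter f ik.1 - X)
@[simp] lemma Xop_single (ik : ℕ × ℕ) (p : ℂ[X]) :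
    Xop (Finsupp.single ik p) = Finsupp.single (ik.1 + 1, ik.2) p := by simp [Xop]
@[simp] lemma Hop_single (f : ℂ[X]) (ik : ℕ × ℕ) (p : ℂ[X]) :
    Hop f (Finsupp.single ik p) = Finsupp.single ik (sigmaIter f ik.1 * p) := by
  simp [Hop, LinearMap.mulLeft_apply]
@[simp] lemma Yop_single (f : ℂ[X]) (ik : ℕ × ℕ) (p : ℂ[X]) :
    Yop f (Finsupp.single ik p) =
      Finsupp.single (ik.1, ik.2 + 1) (p.comp f) +
      Finsupp.single (ik.1 - 1, ik.2) ((sigmaIter f ik.1 - X) * p) := by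
  simp [Yop, compF_apply, LinearMap.mulLeft_apply]

-- End-algebra: Module.End ℂ Mrep
lemma Hop_pow_single (f : ℂ[X]) (n : ℕ) (ik : ℕ × ℕ) (p : ℂ[X]) :
    (Hop f ^ n) (Finsupp.single ik p) = Finsupp.single ik ((sigmaIter f ik.1) ^ n * p) := by
  induction n generalizing p with
  | zero => simp
  | succ n ih =>
    rw [pow_succ, Module.End.mul_apply, Hop_single, ih]
    congr 1
    ring

lemma aeval_Hop_single (f q : ℂ[X]) (ik : ℕ × ℕ) (p : ℂ[X]) :
    (aeval (Hop f) q : Module.End ℂ Mrep) (Finsupp.single ik p) =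
      Finsupp.single ik (q.comp (sigmaIter f ik.1) * p) := by
  induction q using Polynomial.induction_on' with
  | add r s hr hs =>
    simp [map_add, LinearMap.add_apply, hr, hs, add_comp, add_mul, Finsupp.single_add]
  | monomial n c =>
    rw [aeval_monomial]
    simp only [Module.End.mul_apply, Algebra.algebraMap_eq_smul_one,
      LinearMap.smul_apply, Module.End.one_apply]
    rw [Hop_pow_single]
    rw [Finsupp.smul_single]
    congr 1
    rw [monomial_comp]
    simp [Algebra.smul_def, algebraMap_eq, mul_assoc]

def gens (f : ℂ[X]) : Fin 3 → Module.End ℂ Mrep := ![Xop, Yop f, Hop f]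

def freeRho (f : ℂ[X]) : FreeAlgebra ℂ (Fin 3) →ₐ[ℂ] Module.End ℂ Mrep :=
  FreeAlgebra.lift ℂ (gens f)

lemma freeRho_rel (f : ℂ[X]) : ∀ ⦃a b⦄, HeisRel f a b → freeRho f a = freeRho f b := by
  intro a b hab
  have hX : freeRho f (FreeAlgebra.ι ℂ 0) = Xop := by simp [freeRho, gens]
  have hY : freeRho f (FreeAlgebra.ι ℂ 1) = Yop f := by simp [freeRho, gens]
  have hH : freeRho f (FreeAlgebra.ι ℂ 2) = Hop f := by simp [freeRho, gens]
  have hAe : freeRho f (aeval (FreeAlgebra.ι ℂ 2) f) = aeval (Hop f) f := by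
    rw [← Polynomial.aeval_algHom_apply, hH]
  induction hab with
  | hx =>
    rw [map_mul, map_mul, hX, hH, hAe]
    refine Finsupp.lhom_ext fun ik p => ?_
    simp only [Module.End.mul_apply, Xop_single, Hop_single, aeval_Hop_single]
    congr 1
    rw [comp_sigmaIter, ← sigmaIter_succ]
  | yh =>
    rw [map_mul, map_mul, hY, hH, hAe]
    refine Finsupp.lhom_ext fun ik p => ?_
    simp only [Module.End.mul_apply, Yop_single, Hop_single, aeval_Hop_single, map_add]
    congr 1
    · congr 1
      rw [mul_comp, comp_sigmaIter]
    · cases ik with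
      | mk i k =>
        cases i with
        | zero => simp [sigmaIter]
        | succ j =>
          simp only [Nat.succ_sub_one]
          congr 1
          rw [comp_sigmaIter, ← sigmaIter_succ]
          ring
  | yx =>
    rw [map_mul, map_add, map_mul, map_sub, hX, hY, hH, hAe]
    refine Finsupp.lhom_ext fun ik p => ?_
    simp only [Module.End.mul_apply, LinearMap.add_apply, LinearMap.sub_apply,
      Xop_single, Yop_single, Hop_single, aeval_Hop_single, map_add]
    cases ik with
    | mk i k =>
      simp only [Nat.add_sub_cancel]
      rw [add_assoc]
      congr 1
      cases i with
      | zero =>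
        simp only [sigmaIter, sub_self, zero_mul, Finsupp.single_zero, zero_add, comp_X]
        rw [← Finsupp.single_sub]
        congr 1
        rw [X_comp]
        ring
      | succ j =>
        simp only [Nat.succ_sub_one]
        rw [← Finsupp.single_sub, ← Finsupp.single_add]
        congr 1
        rw [comp_sigmaIter, ← sigmaIter_succ]
        ring

def rho (f : ℂ[X]) : GHA f →ₐ[ℂ] Module.End ℂ Mrep :=
  RingQuot.liftAlgHom ℂ ⟨freeRho f, freeRho_rel f⟩

@[simp] lemma rho_X (f : ℂ[X]) : rho f (ghaX f) = Xop := by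
  rw [ghaX, rho, RingQuot.liftAlgHom_mkAlgHom_apply]
  simp [freeRho, gens]
@[simp] lemma rho_Y (f : ℂ[X]) : rho f (ghaY f) = Yop f := by
  rw [ghaY, rho, RingQuot.liftAlgHom_mkAlgHom_apply]
  simp [freeRho, gens]
@[simp] lemma rho_H (f : ℂ[X]) : rho f (ghaH f) = Hop f := by
  rw [ghaH, rho, RingQuot.liftAlgHom_mkAlgHom_apply]
  simp [freeRho, gens]

variable {f : ℂ[X]}

lemma Q1 : ghaH f * ghaX f = ghaX f * aeval (ghaH f) f := by
  have := RingQuot.mkAlgHom_rel ℂ (HeisRel.hx (f := f))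
  rw [map_mul, map_mul, ← Polynomial.aeval_algHom_apply] at this
  exact this

lemma Q2 : ghaY f * ghaH f = aeval (ghaH f) f * ghaY f := by
  have := RingQuot.mkAlgHom_rel ℂ (HeisRel.yh (f := f))
  rw [map_mul, map_mul, ← Polynomial.aeval_algHom_apply] at this
  exact this

lemma Q3 : ghaY f * ghaX f = ghaX f * ghaY f + (aeval (ghaH f) f - ghaH f) := by
  have := RingQuot.mkAlgHom_rel ℂ (HeisRel.yx (f := f))
  rw [map_mul, map_add, map_mul, map_sub, ← Polynomial.aeval_algHom_apply] at this
  exact this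

lemma D1 (p : ℂ[X]) : aeval (ghaH f) p * ghaX f = ghaX f * aeval (ghaH f) (p.comp f) := by
  induction p using Polynomial.induction_on' with
  | add r s hr hs => rw [map_add, add_mul, hr, hs, add_comp, map_add, mul_add]
  | monomial n c =>
    have base : ∀ m : ℕ, ghaH f ^ m * ghaX f = ghaX f * aeval (ghaH f) f ^ m := by
      intro m
      induction m with
      | zero => simp
      | succ m ih =>
        rw [pow_succ', mul_assoc, ih, ← mul_assoc, Q1, mul_assoc, ← pow_succ']
    rw [aeval_monomial, monomial_comp, map_mul, aeval_C, map_pow]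
    rw [mul_assoc, base, ← mul_assoc, ← mul_assoc]
    congr 1
    rw [Algebra.commutes]

lemma D2 (p : ℂ[X]) : ghaY f * aeval (ghaH f) p = aeval (ghaH f) (p.comp f) * ghaY f := by
  induction p using Polynomial.induction_on' with
  | add r s hr hs => rw [map_add, mul_add, hr, hs, add_comp, map_add, add_mul]
  | monomial n c =>
    have base : ∀ m : ℕ, ghaY f * ghaH f ^ m = aeval (ghaH f) f ^ m * ghaY f := by
      intro m
      induction m with
      | zero => simp
      | succ m ih =>
        rw [pow_succ, ← mul_assoc, ih, mul_assoc, Q2, ← mul_assoc, ← pow_succ]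
    rw [aeval_monomial, monomial_comp, map_mul, aeval_C, map_pow]
    rw [← mul_assoc, ← Algebra.commutes, mul_assoc, base, ← mul_assoc]

lemma D3 (i : ℕ) : ghaH f * ghaX f ^ i = ghaX f ^ i * aeval (ghaH f) (sigmaIter f i) := by
  induction i with
  | zero => simp [sigmaIter]
  | succ n ih =>
    rw [pow_succ, ← mul_assoc, ih, mul_assoc, D1, ← mul_assoc, ← sigmaIter_succ]

lemma D4 (k : ℕ) : ghaY f ^ k * ghaH f = aeval (ghaH f) (sigmaIter f k) * ghaY f ^ k := by
  induction k with
  | zero => simp [sigmaIter]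
  | succ n ih =>
    rw [pow_succ', mul_assoc, ih, ← mul_assoc, D2, mul_assoc, ← sigmaIter_succ]

lemma D4' (k : ℕ) (p : ℂ[X]) :
    ghaY f ^ k * aeval (ghaH f) p =
      aeval (ghaH f) (p.comp (sigmaIter f k)) * ghaY f ^ k := by
  induction k with
  | zero => simp [sigmaIter]
  | succ n ih =>
    rw [pow_succ', mul_assoc, ih, ← mul_assoc, D2, mul_assoc, Polynomial.comp_assoc,
      ← sigmaIter_succ]

lemma D5 (i : ℕ) : ghaY f * ghaX f ^ (i + 1) =
    ghaX f ^ (i + 1) * ghaY f +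
      ghaX f ^ i * aeval (ghaH f) (sigmaIter f (i + 1) - X) := by
  induction i with
  | zero =>
    have h1 : sigmaIter f 1 = f := by simp [sigmaIter]
    rw [pow_one, pow_zero, one_mul, Q3, h1, map_sub, aeval_X]
  | succ n ih =>
    rw [pow_succ, ← mul_assoc, ih, add_mul, mul_assoc, Q3, mul_assoc, D1]
    rw [mul_add, ← mul_assoc, ← pow_succ, ← mul_assoc, ← pow_succ]
    rw [add_assoc]
    congr 1
    rw [sub_comp, X_comp, ← sigmaIter_succ, map_sub, map_sub, aeval_X, ← mul_add]
    congr 1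
    abel

-- vacuum vector and evaluation
def vac : Mrep := Finsupp.single (0, 0) 1

def vev (f : ℂ[X]) : GHA f →ₗ[ℂ] Mrep :=
  LinearMap.applyₗ vac ∘ₗ (rho f).toLinearMap

lemma vev_apply (a : GHA f) : vev f a = rho f a vac := rfl

lemma KEY (i k : ℕ) (g : ℂ[X]) :
    vev f (ghaX f ^ i * aeval (ghaH f) g * ghaY f ^ k) = Finsupp.single (i, k) g := by
  rw [vev_apply, map_mul, map_mul, map_pow, map_pow, rho_X, rho_Y,
    ← Polynomial.aeval_algHom_apply, rho_H]
  have hy : ∀ k : ℕ, (Yop f ^ k) vac = Finsupp.single (0, k) 1 := by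
    intro k
    induction k with
    | zero => rfl
    | succ n ih =>
      rw [pow_succ', Module.End.mul_apply, ih, Yop_single]
      simp [sigmaIter, one_comp]
  have hx : ∀ (i : ℕ) (k : ℕ) (p : ℂ[X]),
      (Xop ^ i) (Finsupp.single (0, k) p) = Finsupp.single (i, k) p := by
    intro i k p
    induction i with
    | zero => rfl
    | succ n ih =>
      rw [pow_succ', Module.End.mul_apply, ih, Xop_single]
  rw [Module.End.mul_apply, Module.End.mul_apply, hy, aeval_Hop_single]
  simp only [sigmaIter, comp_X, mul_one]
  exact hx i k g

-- the basis family
def bb (f : ℂ[X]) : (Σ _ : ℕ × ℕ, ℕ) → GHA f :=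
  fun j => ghaX f ^ j.1.1 * ghaH f ^ j.2 * ghaY f ^ j.1.2

def Wspan (f : ℂ[X]) : Submodule ℂ (GHA f) := Submodule.span ℂ (Set.range (bb f))

lemma MEM (i k : ℕ) (p : ℂ[X]) : ghaX f ^ i * aeval (ghaH f) p * ghaY f ^ k ∈ Wspan f := by
  induction p using Polynomial.induction_on' with
  | add r s hr hs =>
    rw [map_add, mul_add, add_mul]
    exact add_mem hr hs
  | monomial n c =>
    rw [aeval_monomial, ← Algebra.smul_def, mul_smul_comm, smul_mul_assoc]
    exact Submodule.smul_mem _ _ (Submodule.subset_span ⟨⟨(i, k), n⟩, rfl⟩)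

lemma mulX {a : GHA f} (ha : a ∈ Wspan f) : ghaX f * a ∈ Wspan f := by
  induction ha using Submodule.span_induction with
  | mem b hb =>
    obtain ⟨⟨⟨i, k⟩, m⟩, rfl⟩ := hb
    apply Submodule.subset_span
    exact ⟨⟨(i + 1, k), m⟩, by simp [bb, pow_succ', mul_assoc]⟩
  | zero => simp
  | add b c _ _ hb hc => rw [mul_add]; exact add_mem hb hc
  | smul r b _ hb => rw [mul_smul_comm]; exact Submodule.smul_mem _ _ hb

lemma mulH {a : GHA f} (ha : a ∈ Wspan f) : ghaH f * a ∈ Wspan f := by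
  induction ha using Submodule.span_induction with
  | mem b hb =>
    obtain ⟨⟨⟨i, k⟩, m⟩, rfl⟩ := hb
    show ghaH f * (ghaX f ^ i * ghaH f ^ m * ghaY f ^ k) ∈ Wspan f
    have hm : ghaH f ^ m = aeval (ghaH f) ((X : ℂ[X]) ^ m) := by simp
    rw [← mul_assoc, ← mul_assoc, D3, hm, mul_assoc (ghaX f ^ i), ← map_mul]
    exact MEM i k _
  | zero => simp
  | add b c _ _ hb hc => rw [mul_add]; exact add_mem hb hc
  | smul r b _ hb => rw [mul_smul_comm]; exact Submodule.smul_mem _ _ hb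

lemma mulY {a : GHA f} (ha : a ∈ Wspan f) : ghaY f * a ∈ Wspan f := by
  induction ha using Submodule.span_induction with
  | mem b hb =>
    obtain ⟨⟨⟨i, k⟩, m⟩, rfl⟩ := hb
    show ghaY f * (ghaX f ^ i * ghaH f ^ m * ghaY f ^ k) ∈ Wspan f
    have hm : ghaH f ^ m = aeval (ghaH f) ((X : ℂ[X]) ^ m) := by simp
    cases i with
    | zero =>
      rw [pow_zero, one_mul, hm, ← mul_assoc, D2, mul_assoc, ← pow_succ']
      have := MEM (f := f) 0 (k + 1) (((X : ℂ[X]) ^ m).comp f)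
      rw [pow_zero, one_mul] at this
      exact this
    | succ j =>
      rw [← mul_assoc, ← mul_assoc, D5, add_mul, add_mul]
      apply add_mem
      · rw [hm, mul_assoc (ghaX f ^ (j + 1)), D2, ← mul_assoc, mul_assoc _ (ghaY f),
          ← pow_succ']
        exact MEM _ _ _
      · rw [hm, mul_assoc (ghaX f ^ j), ← map_mul]
        exact MEM _ _ _
  | zero => simp
  | add b c _ _ hb hc => rw [mul_add]; exact add_mem hb hc
  | smul r b _ hb => rw [mul_smul_comm]; exact Submodule.smul_mem _ _ hb

lemma Wspan_top : Wspan f = ⊤ := by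
  rw [Submodule.eq_top_iff']
  intro a
  obtain ⟨u, rfl⟩ := RingQuot.mkAlgHom_surjective ℂ (HeisRel f) a
  have main : ∀ u : FreeAlgebra ℂ (Fin 3),
      ∀ b ∈ Wspan f, RingQuot.mkAlgHom ℂ (HeisRel f) u * b ∈ Wspan f := by
    intro u
    induction u using FreeAlgebra.induction with
    | grade0 r =>
      intro b hb
      rw [AlgHom.commutes, ← Algebra.smul_def]
      exact Submodule.smul_mem _ _ hb
    | grade1 j =>
      intro b hb
      fin_cases j
      · exact mulX hb
      · exact mulY hb
      · exact mulH hb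
    | mul u v hu hv =>
      intro b hb
      rw [map_mul, mul_assoc]
      exact hu _ (hv _ hb)
    | add u v hu hv =>
      intro b hb
      rw [map_add, add_mul]
      exact add_mem (hu _ hb) (hv _ hb)
  have h1 : (1 : GHA f) ∈ Wspan f := by
    have := Submodule.subset_span (R := ℂ) (s := Set.range (bb f)) ⟨⟨(0,0),0⟩, rfl⟩
    simpa [bb, Wspan] using this
  have := main u 1 h1
  rwa [mul_one] at this

def MB : Module.Basis (Σ _ : ℕ × ℕ, ℕ) ℂ Mrep :=
  Finsupp.basis fun _ => Polynomial.basisMonomials ℂ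

lemma MB_apply (j : Σ _ : ℕ × ℕ, ℕ) : MB j = Finsupp.single j.1 ((X : ℂ[X]) ^ j.2) := by
  cases j with
  | mk ik m =>
    rw [MB, Finsupp.coe_basis]
    simp [X_pow_eq_monomial]

lemma vev_bb (j : Σ _ : ℕ × ℕ, ℕ) : vev f (bb f j) = MB j := by
  cases j with
  | mk ik m =>
    rw [MB_apply]
    have hm : ghaH f ^ m = aeval (ghaH f) ((X : ℂ[X]) ^ m) := by simp
    rw [bb, hm]
    exact KEY ik.1 ik.2 _

lemma bb_indep : LinearIndependent ℂ (bb f) := by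
  apply LinearIndependent.of_comp (vev f)
  have : (vev f) ∘ (bb f) = ⇑MB := funext fun j => vev_bb j
  rw [this]
  exact MB.linearIndependent

def BB (f : ℂ[X]) : Module.Basis (Σ _ : ℕ × ℕ, ℕ) ℂ (GHA f) :=
  Module.Basis.mk bb_indep (by rw [← Wspan_top (f := f)]; exact le_rfl)

lemma BB_apply (j : Σ _ : ℕ × ℕ, ℕ) : BB f j = bb f j := Module.Basis.mk_apply _ _ _

lemma repr_eq (a : GHA f) : MB.repr (vev f a) = (BB f).repr a := by
  have : (MB.repr.toLinearMap ∘ₗ vev f) = ((BB f).repr.toLinearMap) := by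
    apply (BB f).ext
    intro j
    simp only [LinearMap.comp_apply, LinearEquiv.coe_toLinearMap, BB_apply, vev_bb]
    rw [Module.Basis.repr_self, ← BB_apply, Module.Basis.repr_self]
  exact DFunLike.congr_fun this a

def rop (f : ℂ[X]) : Mrep →ₗ[ℂ] Mrep :=
  Finsupp.lsum ℂ fun ik =>
    Finsupp.lsingle ik ∘ₗ (LinearMap.mulLeft ℂ (sigmaIter f ik.2)).restrictScalars ℂ

@[simp] lemma rop_single (ik : ℕ × ℕ) (p : ℂ[X]) :
    rop f (Finsupp.single ik p) = Finsupp.single ik (sigmaIter f ik.2 * p) := by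
  simp [rop, LinearMap.mulLeft_apply]

lemma Hop_apply (m : Mrep) (ik : ℕ × ℕ) :
    Hop f m ik = sigmaIter f ik.1 * m ik := by
  classical
  induction m using Finsupp.induction_linear with
  | zero => simp
  | add a b ha hb => simp [ha, hb, mul_add]
  | single jl p =>
    rw [Hop_single]
    rcases eq_or_ne jl ik with rfl | hne
    · simp
    · rw [Finsupp.single_eq_of_ne hne.symm, Finsupp.single_eq_of_ne hne.symm, mul_zero]

lemma rop_apply (m : Mrep) (ik : ℕ × ℕ) :
    rop f m ik = sigmaIter f ik.2 * m ik := by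
  classical
  induction m using Finsupp.induction_linear with
  | zero => simp
  | add a b ha hb => simp [ha, hb, mul_add]
  | single jl p =>
    rw [rop_single]
    rcases eq_or_ne jl ik with rfl | hne
    · simp
    · rw [Finsupp.single_eq_of_ne hne.symm, Finsupp.single_eq_of_ne hne.symm, mul_zero]

lemma vev_h_mul (a : GHA f) : vev f (ghaH f * a) = Hop f (vev f a) := by
  rw [vev_apply, vev_apply, map_mul, Module.End.mul_apply, rho_H]

lemma vev_mul_h (a : GHA f) : vev f (a * ghaH f) = rop f (vev f a) := by
  have hmap : (vev f ∘ₗ LinearMap.mulRight ℂ (ghaH f)) = (rop f ∘ₗ vev f) := by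
    apply (BB f).ext
    intro j
    cases j with
    | mk ik m =>
      simp only [LinearMap.comp_apply, LinearMap.mulRight_apply, BB_apply, vev_bb]
      have hm : ghaH f ^ m = aeval (ghaH f) ((X : ℂ[X]) ^ m) := by simp
      have lhs : bb f ⟨ik, m⟩ * ghaH f =
          ghaX f ^ ik.1 * aeval (ghaH f) ((X : ℂ[X]) ^ m * sigmaIter f ik.2) * ghaY f ^ ik.2 := by
        rw [bb, hm, mul_assoc, D4, ← mul_assoc, mul_assoc (ghaX f ^ ik.1), ← map_mul]
      rw [lhs, KEY, MB_apply, rop_single, Prod.mk.eta]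
      congr 1
      ring
  exact DFunLike.congr_fun hmap a

lemma commute_diag (k : ℕ) (g : ℂ[X]) :
    Commute (ghaH f) (ghaX f ^ k * aeval (ghaH f) g * ghaY f ^ k) := by
  show ghaH f * _ = _ * ghaH f
  have l1 : ghaH f * (ghaX f ^ k * aeval (ghaH f) g * ghaY f ^ k)
      = ghaX f ^ k * aeval (ghaH f) (sigmaIter f k * g) * ghaY f ^ k := by
    rw [← mul_assoc, ← mul_assoc, D3, mul_assoc (ghaX f ^ k), ← map_mul]
  have l2 : (ghaX f ^ k * aeval (ghaH f) g * ghaY f ^ k) * ghaH f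
      = ghaX f ^ k * aeval (ghaH f) (g * sigmaIter f k) * ghaY f ^ k := by
    rw [mul_assoc, D4, ← mul_assoc, mul_assoc (ghaX f ^ k), ← map_mul]
  rw [l1, l2, mul_comm g]


/-- For deg f > 1: x^i g(h) y^k commutes with h iff i = k (g ≠ 0); the centralizer
of h in H(f) is exactly H(f)_0, and H(f)_0 is maximal commutative. -/
theorem gha_centralizer_h (f : ℂ[X]) (hf : 1 < f.natDegree) :
    (∀ (g : ℂ[X]), g ≠ 0 → ∀ i k : ℕ,
        (Commute (ghaH f) ((ghaX f) ^ i * aeval (ghaH f) g * (ghaY f) ^ k) ↔ i = k)) ∧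
    (∀ a : GHA f,
        Commute (ghaH f) a ↔
          a ∈ Submodule.span ℂ
            {a : GHA f | ∃ k m : ℕ, a = (ghaX f) ^ k * (ghaH f) ^ m * (ghaY f) ^ k}) ∧
    (∀ a : GHA f,
        (∀ b ∈ Submodule.span ℂ
            {a : GHA f | ∃ k m : ℕ, a = (ghaX f) ^ k * (ghaH f) ^ m * (ghaY f) ^ k},
          Commute a b) →
        a ∈ Submodule.span ℂ
          {a : GHA f | ∃ k m : ℕ, a = (ghaX f) ^ k * (ghaH f) ^ m * (ghaY f) ^ k}) := by
  classical
  set S : Set (GHA f) := {a : GHA f | ∃ k m : ℕ, a = ghaX f ^ k * ghaH f ^ m * ghaY f ^ k}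
    with hS
  have part1 : ∀ (g : ℂ[X]), g ≠ 0 → ∀ i k : ℕ,
      (Commute (ghaH f) (ghaX f ^ i * aeval (ghaH f) g * ghaY f ^ k) ↔ i = k) := by
    intro g hg i k
    constructor
    · intro hc
      have heq := congrArg (vev f) hc.eq
      rw [vev_h_mul, vev_mul_h, KEY, Hop_single, rop_single] at heq
      have h2 := DFunLike.congr_fun heq (i, k)
      rw [Finsupp.single_eq_same, Finsupp.single_eq_same] at h2
      exact sigmaIter_injective f hf (mul_right_cancel₀ hg h2)
    · rintro rfl
      exact commute_diag i g
  have hdiag : ∀ a : GHA f, Commute (ghaH f) a → a ∈ Submodule.span ℂ S := by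
    intro a hc
    have heq := congrArg (vev f) hc.eq
    rw [vev_h_mul, vev_mul_h] at heq
    have hcomp : ∀ ik : ℕ × ℕ, ik.1 ≠ ik.2 → vev f a ik = 0 := by
      intro ik hne
      have h2 := DFunLike.congr_fun heq ik
      rw [Hop_apply, rop_apply] at h2
      have h3 : (sigmaIter f ik.1 - sigmaIter f ik.2) * vev f a ik = 0 := by
        rw [sub_mul, h2, sub_self]
      rcases mul_eq_zero.mp h3 with h4 | h4
      · exact absurd (sigmaIter_injective f hf (sub_eq_zero.mp h4)) hne
      · exact h4
    have hsum := (BB f).linearCombination_repr a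
    rw [Finsupp.linearCombination_apply] at hsum
    rw [← hsum]
    apply Submodule.sum_mem
    intro j hj
    apply Submodule.smul_mem
    apply Submodule.subset_span
    rw [BB_apply]
    have hcj : (BB f).repr a j ≠ 0 := Finsupp.mem_support_iff.mp hj
    rw [← repr_eq] at hcj
    have hMB : MB.repr (vev f a) j = (Polynomial.basisMonomials ℂ).repr (vev f a j.1) j.2 := by
      rw [MB]
      exact Finsupp.basis_repr _ _ _
    rw [hMB] at hcj
    have hdiagj : j.1.1 = j.1.2 := by
      by_contra hne
      rw [hcomp j.1 hne] at hcj
      simp at hcj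
    exact ⟨j.1.1, j.2, by rw [bb, hdiagj]⟩
  have hspan_comm : ∀ a ∈ Submodule.span ℂ S, Commute (ghaH f) a := by
    intro a ha
    induction ha using Submodule.span_induction with
    | mem b hb =>
      obtain ⟨k, m, rfl⟩ := hb
      have hm : ghaH f ^ m = aeval (ghaH f) ((X : ℂ[X]) ^ m) := by simp
      rw [hm]
      exact commute_diag k _
    | zero => exact Commute.zero_right _
    | add b c _ _ hb hc => exact hb.add_right hc
    | smul r b _ hb => exact hb.smul_right r
  refine ⟨part1, fun a => ⟨hdiag a, hspan_comm a⟩, ?_⟩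
  intro a hcomm
  apply hdiag
  have hmem : ghaH f ∈ Submodule.span ℂ S := by
    apply Submodule.subset_span
    exact ⟨0, 1, by simp⟩
  exact (hcomm (ghaH f) hmem).symm
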